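/- In the setting of a minimal nilpotent f and an embeddable element s ∈ g_{1/2} (with [s,s*]=2x, s* ∈ g_{-1/2}), for every u in the centralizer g_{1/2}^s = {u ∈ g_{1/2} : [s,u]=0}, one has [f,[s,[f,u]]] = 0; that is, [s,[f,u]] lies in g₀^f. -/

import Mathlib

section Aux

variable {F : Type*} [Field F] [CharZero F]
  {g : Type*} [LieRing g] [LieAlgebra F g] [FiniteDimensional F g]

/-- If `w` is a `-2`-eigenvector of `ad x`, `p` is a `-1`-eigenvector, `r` a `+1`-eigenvector
with `⁅r,p⁆ = 2x`, and `⁅r,w⁆ ∈ F•p`, then repeated bracketing with `p` produces eigenvectors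
of unboundedly negative eigenvalue, forcing `w = 0`. -/
private lemma ladder_zero (x p r w : g) (c : F)
    (hxp : ⁅x, p⁆ = -p) (hxr : ⁅x, r⁆ = r) (hrp : ⁅r, p⁆ = (2 : F) • x)
    (hxw : ⁅x, w⁆ = (-2 : F) • w) (hrw : ⁅r, w⁆ = c • p) : w = 0 := by
  set W : ℕ → g := fun j => ((LieAlgebra.ad F g p)^[j]) w with hW
  have hW0 : W 0 = w := rfl
  have hWs : ∀ j, W (j + 1) = ⁅p, W j⁆ := by
    intro j
    simp only [hW, Function.iterate_succ_apply', LieAlgebra.ad_apply]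
  have hxW : ∀ j, ⁅x, W j⁆ = (-(j : F) - 2) • W j := by
    intro j
    induction j with
    | zero => rw [hW0, hxw]; norm_num
    | succ n ih =>
      rw [hWs n, leibniz_lie, hxp, ih, neg_lie, lie_smul, ← hWs n]
      push_cast
      module
  have hrW : ∀ j, ⁅r, W (j + 1)⁆ = ((-(j : F) - 1) * ((j : F) + 4)) • W j := by
    intro j
    induction j with
    | zero =>
      rw [hWs 0, leibniz_lie, hrp, hW0, hrw, smul_lie, hxw, lie_smul, lie_self, smul_zero,
        add_zero]
      push_cast
      module
    | succ n ih =>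
      rw [hWs (n + 1), leibniz_lie, hrp, ih, smul_lie, hxW (n + 1), lie_smul, ← hWs n]
      push_cast
      module
  have hex : ∃ J, W J = 0 := by
    by_contra hcon
    push_neg at hcon
    have hinj : Function.Injective (fun j : ℕ => -(j : F) - 2) := by
      intro a b hab
      simp only [sub_left_inj, neg_inj, Nat.cast_inj] at hab
      exact hab
    have hli : LinearIndependent F W := by
      refine Module.End.eigenvectors_linearIndependent' (LieAlgebra.ad F g x)
        (fun j : ℕ => -(j : F) - 2) hinj W (fun j => ⟨?_, hcon j⟩)
      rw [Module.End.mem_eigenspace_iff, LieAlgebra.ad_apply]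
      exact hxW j
    have h0 : Module.finrank F g = 0 := hli.finrank_eq_zero_of_infinite
    have : Subsingleton g := by
      rw [← Module.finrank_zero_iff (R := F)]
      exact h0
    exact hcon 0 (Subsingleton.elim _ _)
  obtain ⟨J, hJ⟩ := hex
  have down : ∀ j, W j = 0 → W 0 = 0 := by
    intro j
    induction j with
    | zero => exact id
    | succ n ih =>
      intro h0
      apply ih
      have h1 := hrW n
      rw [h0, lie_zero] at h1
      have hne : (-(n : F) - 1) * ((n : F) + 4) ≠ 0 := by
        have ha : ((n : F) + 1) ≠ 0 := by
          have := Nat.cast_ne_zero (R := F).mpr (Nat.succ_ne_zero n)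
          push_cast at this
          exact this
        have hb : ((n : F) + 4) ≠ 0 := by
          have := Nat.cast_ne_zero (R := F).mpr (show n + 4 ≠ 0 by omega)
          push_cast at this
          exact this
        apply mul_ne_zero _ hb
        intro hcc
        apply ha
        linear_combination -hcc
      rcases smul_eq_zero.mp h1.symm with h | h
      · exact absurd h hne
      · exact h
  rw [← hW0]
  exact down J hJ

/-- There is no "Jordan vector" `k` with `⁅x, k⁆ = -k + f` in this setting. -/
private lemma no_jordan (e x f : g)
    (hef : ⁅e, f⁆ = (2 : F) • x) (hxe : ⁅x, e⁆ = e) (hxf : ⁅x, f⁆ = -f)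
    (hgm1 : ∀ w : g, ⁅x, w⁆ = -w → ∃ c : F, w = c • f) (he : e ≠ 0)
    (k : g) (hk : ⁅x, k⁆ = -k + f) : False := by
  have hfe : ⁅f, e⁆ = -((2 : F) • x) := by rw [← lie_skew, hef]
  -- Stage A : ⁅f, k⁆ = 0
  have hxfk : ⁅x, ⁅f, k⁆⁆ = (-2 : F) • ⁅f, k⁆ := by
    rw [leibniz_lie, hxf, hk, neg_lie, lie_add, lie_neg, lie_self]
    module
  obtain ⟨c1, hc1⟩ : ∃ c1 : F, ⁅e, ⁅f, k⁆⁆ = c1 • f := by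
    apply hgm1
    rw [leibniz_lie, hxe, hxfk, lie_smul]
    module
  have hfk : ⁅f, k⁆ = 0 := ladder_zero x f e ⁅f, k⁆ c1 hxf hxe hef hxfk hc1
  -- Stage B : build the ascending ladder
  set q : g := ⁅e, k⁆ with hq
  have hxq : ⁅x, q⁆ = (2 : F) • x := by
    rw [hq, leibniz_lie, hxe, hk, lie_add, lie_neg, hef]
    module
  have hfq : ⁅f, q⁆ = (2 : F) • k - (2 : F) • f := by
    rw [hq, leibniz_lie, hfe, hfk, lie_zero, add_zero, neg_lie, smul_lie, hk]
    module
  set m : g := ⁅e, q⁆ with hm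
  have hxm : ⁅x, m⁆ = m - (2 : F) • e := by
    rw [hm, leibniz_lie, hxe, hxq, lie_smul]
    have : ⁅e, x⁆ = -e := by rw [← lie_skew, hxe]
    rw [this]
    module
  have hfm : ⁅f, m⁆ = (2 : F) • q - (8 : F) • x := by
    rw [hm, leibniz_lie, hfe, hfq, neg_lie, smul_lie, hxq, lie_sub, lie_smul, lie_smul, hef]
    module
  set z : g := ⁅e, m⁆ with hz
  have hxz : ⁅x, z⁆ = (2 : F) • z := by
    rw [hz, leibniz_lie, hxe, hxm, lie_sub, lie_smul, lie_self, smul_zero]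
    module
  have hfz : ⁅f, z⁆ = (12 : F) • e := by
    rw [hz, leibniz_lie, hfe, hfm, neg_lie, smul_lie, hxm, lie_sub, lie_smul, lie_smul, hm]
    have : ⁅e, x⁆ = -e := by rw [← lie_skew, hxe]
    rw [this]
    module
  have hz0 : z = 0 := by
    refine ladder_zero (-x) e f z 12 ?_ ?_ ?_ ?_ hfz
    · rw [neg_lie, hxe]
    · rw [neg_lie, hxf, neg_neg]
    · rw [hfe]; module
    · rw [neg_lie, hxz]; module
  rw [hz0, lie_zero] at hfz
  have : e = 0 := by
    rcases smul_eq_zero.mp hfz.symm with h | h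
    · norm_num at h
    · exact h
  exact he this

end Aux

/-- For a minimal nilpotent f and an embeddable s ∈ g_{1/2} (with [s,s*] = 2x),
every u ∈ g_{1/2} with [s,u] = 0 satisfies [f,[s,[f,u]]] = 0, i.e. [s,[f,u]]
lies in the centralizer g₀^f of f in g₀. -/
theorem stmt11 {F : Type*} [Field F] [CharZero F]
    {g : Type*} [LieRing g] [LieAlgebra F g] [FiniteDimensional F g]
    [LieAlgebra.IsSimple F g]
    (B : g →ₗ[F] g →ₗ[F] F)
    (hsymm : ∀ a b : g, B a b = B b a)
    (hinv : ∀ a b c : g, B ⁅a, b⁆ c = B a ⁅b, c⁆)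
    (hnondeg : ∀ a : g, (∀ b : g, B a b = 0) → a = 0)
    (e x f : g)
    (hef : ⁅e, f⁆ = (2 : F) • x) (hxe : ⁅x, e⁆ = e) (hxf : ⁅x, f⁆ = -f)
    (hgm1 : ∀ w : g, ⁅x, w⁆ = -w → ∃ c : F, w = c • f)
    (s sstar : g)
    (hs : ⁅x, s⁆ = (1 / 2 : F) • s) (hsstar : ⁅x, sstar⁆ = (-(1 / 2 : F)) • sstar)
    (hss : ⁅s, sstar⁆ = (2 : F) • x)
    (u : g) (hu : ⁅x, u⁆ = (1 / 2 : F) • u) (hsu : ⁅s, u⁆ = 0) :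
    ⁅f, ⁅s, ⁅f, u⁆⁆⁆ = 0 := by
  by_cases hf0 : f = 0
  · rw [hf0, zero_lie]
  have he0 : e ≠ 0 := by
    intro he
    rw [he, zero_lie] at hef
    have hx0 : x = 0 := by
      rcases smul_eq_zero.mp hef.symm with h | h
      · norm_num at h
      · exact h
    rw [hx0, zero_lie] at hxf
    exact hf0 (neg_eq_zero.mp hxf.symm)
  -- weights
  set v : g := ⁅f, u⁆ with hv
  have hxv : ⁅x, v⁆ = (-(1 / 2 : F)) • v := by
    rw [hv, leibniz_lie, hxf, hu, neg_lie, lie_smul]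
    module
  set t : g := ⁅s, v⁆ with ht
  have hxt : ⁅x, t⁆ = 0 := by
    rw [ht, leibniz_lie, hs, hxv, smul_lie, lie_smul]
    module
  set w : g := ⁅f, t⁆ with hw
  have hxw : ⁅x, w⁆ = -w := by
    rw [hw, leibniz_lie, hxf, hxt, lie_zero, neg_lie, add_zero]
  obtain ⟨c, hc⟩ := hgm1 w hxw
  -- B e w = 0
  have hBsv : B s v = 0 := by
    have h1 := hinv s f u
    have h2 : ⁅s, f⁆ = -⁅f, s⁆ := by rw [← lie_skew]
    rw [← hv, h2] at h1
    have h3 := hinv f s u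
    rw [hsu, map_zero] at h3
    rw [map_neg, LinearMap.neg_apply, h3, neg_zero] at h1
    exact h1.symm
  have hBxt : B x t = 0 := by
    have h1 := hinv x s v
    rw [hs, ← ht] at h1
    rw [map_smul, LinearMap.smul_apply, hBsv, smul_zero] at h1
    exact h1.symm
  have hBew : B e w = 0 := by
    have h1 := hinv e f t
    rw [hef, ← hw] at h1
    rw [map_smul, LinearMap.smul_apply, hBxt, smul_zero] at h1
    exact h1.symm
  -- B e f ≠ 0
  have hBef : B e f ≠ 0 := by
    intro h0
    apply he0
    apply hnondeg
    intro b
    -- decompose g = ker T ⊔ range T for T = ad x + 1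
    set T : g →ₗ[F] g := LieAlgebra.ad F g x + LinearMap.id with hT
    have hTapp : ∀ a : g, T a = ⁅x, a⁆ + a := by
      intro a
      simp [hT, LieAlgebra.ad_apply]
    have hkerf : f ∈ LinearMap.ker T := by
      rw [LinearMap.mem_ker, hTapp, hxf, neg_add_cancel]
    have hker : LinearMap.ker T = Submodule.span F {f} := by
      apply le_antisymm
      · intro a ha
        rw [LinearMap.mem_ker, hTapp] at ha
        obtain ⟨ca, hca⟩ := hgm1 a (eq_neg_of_add_eq_zero_left ha)
        rw [hca]
        exact Submodule.smul_mem _ _ (Submodule.mem_span_singleton_self f)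
      · rw [Submodule.span_singleton_le_iff_mem]
        exact hkerf
    have hdisj : Disjoint (LinearMap.ker T) (LinearMap.range T) := by
      rw [disjoint_iff_inf_le]
      intro a ha
      have ham : a ∈ LinearMap.ker T ⊓ LinearMap.range T := ha
      obtain ⟨ha1, ha2⟩ := Submodule.mem_inf.mp ham
      rw [hker, Submodule.mem_span_singleton] at ha1
      obtain ⟨ca, hca⟩ := ha1
      obtain ⟨k', hk'⟩ := ha2
      by_cases hca0 : ca = 0
      · simp [← hca, hca0]
      · exfalso
        apply no_jordan e x f hef hxe hxf hgm1 he0 (ca⁻¹ • k')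
        have : T (ca⁻¹ • k') = f := by
          rw [map_smul, hk', ← hca, smul_smul, inv_mul_cancel₀ hca0, one_smul]
        rw [hTapp] at this
        rw [← this]
        abel
    have hsup : LinearMap.ker T ⊔ LinearMap.range T = ⊤ := by
      apply Submodule.eq_top_of_disjoint
      · rw [add_comm]
        exact (LinearMap.finrank_range_add_finrank_ker T).ge
      · exact hdisj
    have hb : b ∈ LinearMap.ker T ⊔ LinearMap.range T := hsup ▸ Submodule.mem_top
    obtain ⟨y, hy, z, hzr, rfl⟩ := Submodule.mem_sup.mp hb
    rw [hker, Submodule.mem_span_singleton] at hy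
    obtain ⟨cy, hcy⟩ := hy
    obtain ⟨k', hk'⟩ := hzr
    have hBeT : B e z = 0 := by
      rw [← hk', hTapp, map_add]
      have h1 := hinv e x k'
      have h2 : ⁅e, x⁆ = -e := by rw [← lie_skew, hxe]
      rw [h2, map_neg, LinearMap.neg_apply] at h1
      rw [← h1]
      ring
    rw [map_add, hBeT, add_zero, ← hcy, map_smul, h0, smul_zero]
  -- conclude
  have : B e w = c * B e f := by
    rw [hc, map_smul, smul_eq_mul]
  rw [hBew] at this
  have hc0 : c = 0 := by
    rcases mul_eq_zero.mp this.symm with h | h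
    · exact h
    · exact absurd h hBef
  rw [hw] at hc ⊢
  rw [hc, hc0, zero_smul]
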